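/- arXiv:1611.04818 — 2 statements merged into one kernel-verified Lean document; each statement's English description precedes it below -/
import Mathlib

section
/- For the acquaintance vaccination model with a perfect vaccine, the post-vaccination threshold parameter can be written as R_v = η(p')·(1 − 2p' + p' p_N) where p' = p_S p_N and η depends on (p_S, p_N) only through p'; hence for fixed coverage (fixed p'), R_v is increasing in p_N, so R_v is minimised at (p_S,p_N)=(1,p') and maximised at (p_S,p_N)=(p',1), with R_v^best = (1−p')·R_v^worst. -/
/-- The post-vaccination threshold parameter for acquaintance vaccination with a
perfect vaccine:
`R_v = (μ_{D̃_U-1} + μ_{D_U} μ_S(U,U)) (p_S^U(1-p_N) + 1 - p_S^U) (1-p̃_V) p_G`,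
where `p_S^U = p_S(1-p_N)/(1-p_S p_N)`, `p̃_V = 1 - f_{D̃-1}(1-p_S p_N)`,
`μ_{D̃_U-1} = (1-p_S p_N) f'_{D̃-1}(1-p_S p_N)/(1-p̃_V)` and
`μ_{D_U} = (1-p_S p_N) f'_D(1-p_S p_N)/f_D(1-p_S p_N)`. -/
noncomputable def Rv (fD fDt1 : ℝ → ℝ) (muS pG pS pN : ℝ) : ℝ :=
  ((1 - pS * pN) * deriv fDt1 (1 - pS * pN) / (1 - (1 - fDt1 (1 - pS * pN)))
      + (1 - pS * pN) * deriv fD (1 - pS * pN) / fD (1 - pS * pN) * muS)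
    * ((pS * (1 - pN) / (1 - pS * pN)) * (1 - pN) + 1 - pS * (1 - pN) / (1 - pS * pN))
    * (1 - (1 - fDt1 (1 - pS * pN))) * pG

/-- `η(p') = f_{D̃-1}(1-p') p_G (f'_{D̃-1}(1-p')/f_{D̃-1}(1-p') + μ_S(U,U) f'_D(1-p')/f_D(1-p'))`. -/
noncomputable def eta (fD fDt1 : ℝ → ℝ) (muS pG p' : ℝ) : ℝ :=
  fDt1 (1 - p') * pG *
    (deriv fDt1 (1 - p') / fDt1 (1 - p') + muS * deriv fD (1 - p') / fD (1 - p'))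

lemma Rv_key (fD fDt1 : ℝ → ℝ) (muS pG pS pN p' : ℝ)
    (hp : pS * pN = p') (h1 : p' < 1)
    (hfD : 0 < fD (1 - p')) (hfDt1 : 0 < fDt1 (1 - p')) :
    Rv fD fDt1 muS pG pS pN = eta fD fDt1 muS pG p' * (1 - 2 * p' + p' * pN) := by
  subst hp
  have h1' : (1 : ℝ) - pS * pN ≠ 0 := by intro h; nlinarith
  have h2' : fDt1 (1 - pS * pN) ≠ 0 := ne_of_gt hfDt1
  have h3' : fD (1 - pS * pN) ≠ 0 := ne_of_gt hfD
  unfold Rv eta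
  rw [sub_sub_cancel]
  field_simp
  ring

/-- For acquaintance vaccination with a perfect vaccine,
`R_v = η(p')(1 - 2p' + p' p_N)` with `p' = p_S p_N`, where `η` depends on
`(p_S,p_N)` only through `p'`; hence for fixed coverage `p'`, `R_v` is
increasing in `p_N`, so it is minimised at `(p_S,p_N) = (1,p')` and maximised
at `(p_S,p_N) = (p',1)`, with `R_v^best = (1-p') R_v^worst`. -/
theorem acquaintance_perfect_vaccine_Rv (fD fDt1 : ℝ → ℝ) (muS pG pS pN p' : ℝ)
    (hp' : p' = pS * pN) (h0 : 0 < p') (h1 : p' < 1)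
    (hS : pS ≤ 1) (hN : pN ≤ 1)
    (hfD : 0 < fD (1 - p')) (hfDt1 : 0 < fDt1 (1 - p'))
    (hdD : 0 ≤ deriv fD (1 - p')) (hdDt : 0 < deriv fDt1 (1 - p'))
    (hmuS : 0 ≤ muS) (hpG : 0 < pG) :
    Rv fD fDt1 muS pG pS pN = eta fD fDt1 muS pG p' * (1 - 2 * p' + p' * pN) ∧
    (∀ pS₁ pN₁ pS₂ pN₂ : ℝ, pS₁ * pN₁ = p' → pS₂ * pN₂ = p' → pN₁ < pN₂ →
      Rv fD fDt1 muS pG pS₁ pN₁ < Rv fD fDt1 muS pG pS₂ pN₂) ∧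
    Rv fD fDt1 muS pG 1 p' = (1 - p') * Rv fD fDt1 muS pG p' 1 := by
  have heta : 0 < eta fD fDt1 muS pG p' := by
    unfold eta
    have h2 : 0 < deriv fDt1 (1 - p') / fDt1 (1 - p') := div_pos hdDt hfDt1
    have h3 : 0 ≤ muS * deriv fD (1 - p') / fD (1 - p') := by positivity
    positivity
  refine ⟨Rv_key fD fDt1 muS pG pS pN p' hp'.symm h1 hfD hfDt1, ?_, ?_⟩
  · intro pS₁ pN₁ pS₂ pN₂ h₁ h₂ hlt
    rw [Rv_key fD fDt1 muS pG pS₁ pN₁ p' h₁ h1 hfD hfDt1,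
        Rv_key fD fDt1 muS pG pS₂ pN₂ p' h₂ h1 hfD hfDt1]
    have : 1 - 2 * p' + p' * pN₁ < 1 - 2 * p' + p' * pN₂ := by nlinarith
    exact mul_lt_mul_of_pos_left this heta
  · rw [Rv_key fD fDt1 muS pG 1 p' p' (one_mul p') h1 hfD hfDt1,
        Rv_key fD fDt1 muS pG p' 1 p' (mul_one p') h1 hfD hfDt1]
    ring
end

section
/- With an all-or-nothing vaccine of efficacy ε administered to v of n household members, the mean number of global infections from a non-initial infected household satisfies μ_{n,v} = Σ_{k=0}^{v} C(v,k) ε^k (1−ε)^{v−k} ((n−k)/n) E[C̃^{(n−k)}]; and if E[C̃^{(n)}] is nondecreasing in n, then μ_{n,v} is nonincreasing in v for fixed n. -/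
open Finset

/-- With an all-or-nothing vaccine of efficacy `ε` given to `v` of
`n` household members, the mean number of global infections from a non-initial
infected household is
`μ_{n,v} = Σ_{k=0}^v C(v,k) ε^k (1-ε)^{v-k} ((n-k)/n) E[C̃^{(n-k)}]`;
if `E[C̃^{(n)}]` is nonnegative and nondecreasing in `n`, then `μ_{n,v}` is
nonincreasing in `v` for fixed `n`: `μ_{n,v+1} ≤ μ_{n,v}` for `0 ≤ v ≤ n-1`. -/
theorem all_or_nothing_mean_nonincreasing (n : ℕ) (hn : 1 ≤ n) (ε : ℝ)
    (hε0 : 0 ≤ ε) (hε1 : ε ≤ 1)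
    (E : ℕ → ℝ) (hEnn : ∀ k, 0 ≤ E k) (hEmono : Monotone E)
    (v : ℕ) (hv : v + 1 ≤ n) :
    ∑ k ∈ Finset.range (v + 2),
        ((v + 1).choose k : ℝ) * ε ^ k * (1 - ε) ^ (v + 1 - k) *
          (((n - k : ℕ) : ℝ) / (n : ℝ)) * E (n - k)
      ≤ ∑ k ∈ Finset.range (v + 1),
          (v.choose k : ℝ) * ε ^ k * (1 - ε) ^ (v - k) *
            (((n - k : ℕ) : ℝ) / (n : ℝ)) * E (n - k) := by
  have hn0 : (0:ℝ) < n := by exact_mod_cast hn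
  set g : ℕ → ℝ := fun k => (((n - k : ℕ) : ℝ) / (n : ℝ)) * E (n - k) with hg
  have hgnn : ∀ k, 0 ≤ g k := fun k =>
    mul_nonneg (div_nonneg (Nat.cast_nonneg _) hn0.le) (hEnn _)
  have hganti : ∀ k, g (k + 1) ≤ g k := by
    intro k
    apply mul_le_mul
    · have : ((n - (k+1) : ℕ) : ℝ) ≤ ((n - k : ℕ) : ℝ) := by
        exact_mod_cast Nat.sub_le_sub_left (Nat.le_succ k) n
      exact div_le_div_of_nonneg_right this hn0.le
    · exact hEmono (Nat.sub_le_sub_left (Nat.le_succ k) n)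
    · exact hEnn _
    · exact div_nonneg (Nat.cast_nonneg _) hn0.le
  have hε1' : (0:ℝ) ≤ 1 - ε := by linarith
  -- rewrite sums in terms of g
  have hLHS : ∑ k ∈ Finset.range (v + 2),
        ((v + 1).choose k : ℝ) * ε ^ k * (1 - ε) ^ (v + 1 - k) *
          (((n - k : ℕ) : ℝ) / (n : ℝ)) * E (n - k)
      = ∑ k ∈ Finset.range (v + 2),
        ((v + 1).choose k : ℝ) * ε ^ k * (1 - ε) ^ (v + 1 - k) * g k := by
    apply sum_congr rfl; intro k _; simp [hg]; ring
  have hRHS : ∑ k ∈ Finset.range (v + 1),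
        (v.choose k : ℝ) * ε ^ k * (1 - ε) ^ (v - k) *
          (((n - k : ℕ) : ℝ) / (n : ℝ)) * E (n - k)
      = ∑ k ∈ Finset.range (v + 1),
        (v.choose k : ℝ) * ε ^ k * (1 - ε) ^ (v - k) * g k := by
    apply sum_congr rfl; intro k _; simp [hg]; ring
  rw [hLHS, hRHS]
  set S : ℝ := ∑ k ∈ Finset.range (v + 1),
      (v.choose k : ℝ) * ε ^ k * (1 - ε) ^ (v - k) * g k with hS
  set S' : ℝ := ∑ k ∈ Finset.range (v + 1),
      (v.choose k : ℝ) * ε ^ k * (1 - ε) ^ (v - k) * g (k + 1) with hS'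
  have key : ∑ k ∈ Finset.range (v + 2),
      ((v + 1).choose k : ℝ) * ε ^ k * (1 - ε) ^ (v + 1 - k) * g k
      = (1 - ε) * S + ε * S' := by
    rw [Finset.sum_range_succ'
      (fun k => ((v + 1).choose k : ℝ) * ε ^ k * (1 - ε) ^ (v + 1 - k) * g k) (v + 1)]
    have split : ∀ k ∈ Finset.range (v + 1),
        ((v + 1).choose (k + 1) : ℝ) * ε ^ (k + 1) * (1 - ε) ^ (v + 1 - (k + 1)) * g (k + 1)
        = (v.choose k : ℝ) * ε ^ (k + 1) * (1 - ε) ^ (v - k) * g (k + 1)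
          + (v.choose (k + 1) : ℝ) * ε ^ (k + 1) * (1 - ε) ^ (v - k) * g (k + 1) := by
      intro k _
      have : v + 1 - (k + 1) = v - k := by omega
      rw [this, Nat.choose_succ_succ]
      push_cast
      ring
    rw [Finset.sum_congr rfl split, Finset.sum_add_distrib]
    have hA : ∑ k ∈ Finset.range (v + 1),
        (v.choose k : ℝ) * ε ^ (k + 1) * (1 - ε) ^ (v - k) * g (k + 1) = ε * S' := by
      rw [hS', Finset.mul_sum]
      apply sum_congr rfl; intro k _; ring
    have hB : (∑ k ∈ Finset.range (v + 1),
        (v.choose (k + 1) : ℝ) * ε ^ (k + 1) * (1 - ε) ^ (v - k) * g (k + 1))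
        + ((v + 1).choose 0 : ℝ) * ε ^ 0 * (1 - ε) ^ (v + 1 - 0) * g 0
        = (1 - ε) * S := by
      rw [hS, Finset.mul_sum]
      rw [Finset.sum_range_succ'
        (fun k => (1 - ε) * ((v.choose k : ℝ) * ε ^ k * (1 - ε) ^ (v - k) * g k)) v]
      congr 1
      · rw [Finset.sum_range_succ]
        simp only [Nat.choose_succ_self, Nat.cast_zero]
        rw [zero_mul, zero_mul, zero_mul, add_zero]
        apply sum_congr rfl
        intro k hk
        rw [Finset.mem_range] at hk
        have h1 : v - (k + 1) + 1 = v - k := by omega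
        rw [show (1 - ε) * ((v.choose (k+1) : ℝ) * ε ^ (k+1) * (1 - ε) ^ (v - (k+1)) * g (k+1))
          = (v.choose (k+1) : ℝ) * ε ^ (k+1) * ((1 - ε) ^ (v - (k+1)) * (1-ε)) * g (k+1) by ring,
          ← pow_succ, h1]
      · simp
        ring
    linarith [hA, hB,
      Finset.sum_add_distrib (s := Finset.range (v+1))
        (f := fun k => (v.choose k : ℝ) * ε ^ (k + 1) * (1 - ε) ^ (v - k) * g (k + 1))
        (g := fun k => (v.choose (k + 1) : ℝ) * ε ^ (k + 1) * (1 - ε) ^ (v - k) * g (k + 1))]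
  rw [key]
  have hSS' : S' ≤ S := by
    apply Finset.sum_le_sum
    intro k _
    have hw : (0:ℝ) ≤ (v.choose k : ℝ) * ε ^ k * (1 - ε) ^ (v - k) := by positivity
    exact mul_le_mul_of_nonneg_left (hganti k) hw
  nlinarith [hSS', hε0]
end
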